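/- Let n = 5, fix a pair i ≠ j in {1,…,5}, and suppose the parameter collection c satisfies condition (C1): c_i^{kj} c_j^{li} ≠ c_j^{ki} c_i^{lj} for all k ≠ l with k,l ∉ {i,j}. Then the set W = {a ∈ ℝ^5 : a_i = a_j = 0, Σ_{k∉{i,j}} c_i^{kj} a_k = 0, Σ_{k∉{i,j}} c_j^{ki} a_k = 0} is a one-dimensional linear subspace of ℝ^5, and every nonzero a ∈ W satisfies a_k ≠ 0 for all k ∉ {i,j}. -/
import Mathlib

/-- A parameter collection: `c i k j` denotes `c_i^{kj}`, symmetric in the two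
superscripts, with normalizations `c_i^{ii} = 1` and `c_i^{jj} = 0` for `i ≠ j`. -/
def IsParamColl (n : ℕ) (c : Fin n → Fin n → Fin n → ℝ) : Prop :=
  (∀ i j k : Fin n, j ≠ k → c i k j = c i j k) ∧
  (∀ i : Fin n, c i i i = 1) ∧
  (∀ i j : Fin n, i ≠ j → c i j j = 0)

lemma key3 (p2 p3 p4 q2 q3 q4 a2 a3 a4 : ℝ)
    (h23 : p2*q3 - p3*q2 ≠ 0)
    (e1 : p2*a2 + p3*a3 + p4*a4 = 0) (e2 : q2*a2 + q3*a3 + q4*a4 = 0) :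
    ∃ t : ℝ, a2 = t*(p3*q4 - p4*q3) ∧ a3 = t*(p4*q2 - p2*q4) ∧ a4 = t*(p2*q3 - p3*q2) := by
  refine ⟨a4/(p2*q3 - p3*q2), ?_, ?_, ?_⟩
  · rw [div_mul_eq_mul_div, eq_div_iff h23]
    linear_combination q3*e1 - p3*e2
  · rw [div_mul_eq_mul_div, eq_div_iff h23]
    linear_combination p2*e2 - q2*e1
  · rw [div_mul_eq_mul_div, eq_div_iff h23]

lemma master (c : Fin 5 → Fin 5 → Fin 5 → ℝ)
    (i j k2 k3 k4 : Fin 5)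
    (hC1 : ∀ k l : Fin 5, k ≠ l → k ≠ i → k ≠ j → l ≠ i → l ≠ j →
      c i k j * c j l i ≠ c j k i * c i l j)
    (hd : k2 ≠ k3 ∧ k2 ≠ k4 ∧ k3 ≠ k4 ∧ k2 ≠ i ∧ k2 ≠ j ∧ k3 ≠ i ∧ k3 ≠ j ∧ k4 ≠ i ∧ k4 ≠ j)
    (hfil : Finset.univ.filter (fun k => k ≠ i ∧ k ≠ j) = {k2, k3, k4})
    (hcov : ∀ k : Fin 5, k = i ∨ k = j ∨ k = k2 ∨ k = k3 ∨ k = k4) :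
    ∃ W : Submodule ℝ (Fin 5 → ℝ),
      (W : Set (Fin 5 → ℝ)) =
        {a : Fin 5 → ℝ | a i = 0 ∧ a j = 0 ∧
          (∑ k ∈ Finset.univ.filter (fun k => k ≠ i ∧ k ≠ j), c i k j * a k = 0) ∧
          (∑ k ∈ Finset.univ.filter (fun k => k ≠ i ∧ k ≠ j), c j k i * a k = 0)} ∧
      Module.finrank ℝ W = 1 ∧
      ∀ a ∈ W, a ≠ (0 : Fin 5 → ℝ) → ∀ k : Fin 5, k ≠ i → k ≠ j → a k ≠ 0 := by
  obtain ⟨h23, h24, h34, h2i, h2j, h3i, h3j, h4i, h4j⟩ := hd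
  set p : Fin 5 → ℝ := fun m => c i m j with hp
  set q : Fin 5 → ℝ := fun m => c j m i with hq
  have D23 : p k2 * q k3 - p k3 * q k2 ≠ 0 :=
    sub_ne_zero_of_ne (by rw [mul_comm (p k3) (q k2)]; exact hC1 k2 k3 h23 h2i h2j h3i h3j)
  have D24 : p k2 * q k4 - p k4 * q k2 ≠ 0 :=
    sub_ne_zero_of_ne (by rw [mul_comm (p k4) (q k2)]; exact hC1 k2 k4 h24 h2i h2j h4i h4j)
  have D34 : p k3 * q k4 - p k4 * q k3 ≠ 0 :=
    sub_ne_zero_of_ne (by rw [mul_comm (p k4) (q k3)]; exact hC1 k3 k4 h34 h3i h3j h4i h4j)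
  set v : Fin 5 → ℝ := fun k =>
    if k = k2 then p k3 * q k4 - p k4 * q k3
    else if k = k3 then p k4 * q k2 - p k2 * q k4
    else if k = k4 then p k2 * q k3 - p k3 * q k2 else 0 with hv
  have hv2 : v k2 = p k3 * q k4 - p k4 * q k3 := by simp [hv]
  have hv3 : v k3 = p k4 * q k2 - p k2 * q k4 := by simp [hv, h23.symm]
  have hv4 : v k4 = p k2 * q k3 - p k3 * q k2 := by simp [hv, h24.symm, h34.symm]
  have hvi : v i = 0 := by simp [hv, h2i.symm, h3i.symm, h4i.symm]
  have hvj : v j = 0 := by simp [hv, h2j.symm, h3j.symm, h4j.symm]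
  have hsum : ∀ f : Fin 5 → ℝ,
      ∑ k ∈ Finset.univ.filter (fun k => k ≠ i ∧ k ≠ j), f k = f k2 + f k3 + f k4 := by
    intro f
    rw [hfil]
    rw [Finset.sum_insert (by simp [h23, h24]), Finset.sum_insert (by simp [h34]),
      Finset.sum_singleton]
    ring
  refine ⟨Submodule.span ℝ {v}, ?_, ?_, ?_⟩
  · ext a
    simp only [SetLike.mem_coe, Submodule.mem_span_singleton, Set.mem_setOf_eq]
    rw [hsum, hsum]
    constructor
    · rintro ⟨t, rfl⟩
      simp only [Pi.smul_apply, smul_eq_mul, hvi, hvj, hv2, hv3, hv4]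
      refine ⟨by ring, by ring, by ring, by ring⟩
    · rintro ⟨hi, hj, e1, e2⟩
      obtain ⟨t, ha2, ha3, ha4⟩ := key3 (p k2) (p k3) (p k4) (q k2) (q k3) (q k4)
        (a k2) (a k3) (a k4) D23 e1 e2
      refine ⟨t, funext fun k => ?_⟩
      rcases hcov k with rfl | rfl | rfl | rfl | rfl
      · simp [hvi, hi]
      · simp [hvj, hj]
      · simp [hv2, ha2, mul_comm]
      · simp [hv3, ha3, mul_comm]
      · simp [hv4, ha4, mul_comm]
  · have hv0 : v ≠ 0 := by
      intro h
      exact D34 (by simpa [hv2] using congrFun h k2)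
    rw [finrank_span_singleton hv0]
  · intro a ha ha0 k hki hkj
    rw [Submodule.mem_span_singleton] at ha
    obtain ⟨t, rfl⟩ := ha
    have ht : t ≠ 0 := by rintro rfl; simp at ha0
    rcases hcov k with rfl | rfl | rfl | rfl | rfl
    · exact absurd rfl hki
    · exact absurd rfl hkj
    · simpa [hv2] using mul_ne_zero ht D34
    · simpa [hv3] using mul_ne_zero ht (fun h => D24 (by linarith [sub_eq_zero.mp h] ))
    · simpa [hv4] using mul_ne_zero ht D23

theorem stmt12 (c : Fin 5 → Fin 5 → Fin 5 → ℝ) (hc : IsParamColl 5 c)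
    (i j : Fin 5) (hij : i ≠ j)
    (hC1 : ∀ k l : Fin 5, k ≠ l → k ≠ i → k ≠ j → l ≠ i → l ≠ j →
      c i k j * c j l i ≠ c j k i * c i l j) :
    ∃ W : Submodule ℝ (Fin 5 → ℝ),
      (W : Set (Fin 5 → ℝ)) =
        {a : Fin 5 → ℝ | a i = 0 ∧ a j = 0 ∧
          (∑ k ∈ Finset.univ.filter (fun k => k ≠ i ∧ k ≠ j), c i k j * a k = 0) ∧
          (∑ k ∈ Finset.univ.filter (fun k => k ≠ i ∧ k ≠ j), c j k i * a k = 0)} ∧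
      Module.finrank ℝ W = 1 ∧
      ∀ a ∈ W, a ≠ (0 : Fin 5 → ℝ) → ∀ k : Fin 5, k ≠ i → k ≠ j → a k ≠ 0 := by
  have hex : ∀ i j : Fin 5, i ≠ j → ∃ k2 k3 k4 : Fin 5,
      (k2 ≠ k3 ∧ k2 ≠ k4 ∧ k3 ≠ k4 ∧ k2 ≠ i ∧ k2 ≠ j ∧ k3 ≠ i ∧ k3 ≠ j ∧ k4 ≠ i ∧ k4 ≠ j) ∧
      Finset.univ.filter (fun k => k ≠ i ∧ k ≠ j) = {k2, k3, k4} ∧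
      ∀ k : Fin 5, k = i ∨ k = j ∨ k = k2 ∨ k = k3 ∨ k = k4 := by decide
  obtain ⟨k2, k3, k4, hd, hfil, hcov⟩ := hex i j hij
  exact master c i j k2 k3 k4 hC1 hd hfil hcov
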